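/- arXiv:1507.06756 — 2 statements merged into one kernel-verified Lean document; each statement's English description precedes it below -/
import Mathlib

section
/- Let e ≥ 2 and let (n_1, …, n_e) be a sequence of positive integers such that the Hirzebruch–Jung continued fraction [n_1, …, n_e] is defined (all proper tails nonzero) and equals 0. Then n_i = 1 for some index i. -/
/-- Hirzebruch–Jung continued fraction: `hj [] = 0`, `hj (c :: cs) = c - (hj cs)⁻¹`.
(In particular `hj [c] = c` since `(0:ℚ)⁻¹ = 0`.) -/
def hj : List ℚ → ℚ
  | [] => 0
  | c :: cs => c - (hj cs)⁻¹

/-- All proper nonempty tails (suffixes) of `l` have nonzero HJ value, i.e. the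
continued fraction `hj l` is defined. -/
def hjTailsNonzero (l : List ℚ) : Prop :=
  ∀ l' : List ℚ, l' ≠ [] → l' ≠ l → l' <:+ l → hj l' ≠ 0

/-- The HJ continued fraction of `l` is defined and equals `0`. -/
def hjZero (l : List ℚ) : Prop :=
  hjTailsNonzero l ∧ hj l = 0

def castList (l : List ℤ) : List ℚ := l.map fun x => (x : ℚ)

lemma castList_eq (l : List ℤ) : castList l = l.map (fun y : ℤ => (y : ℚ)) := by
  induction l with
  | nil => rfl
  | cons a t ih => simp [castList] at ih ⊢; exact ih

lemma hj_gt_one : ∀ l : List ℚ, l ≠ [] → (∀ x ∈ l, 2 ≤ x) → 1 < hj l := by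
  intro l
  induction l with
  | nil => intro h; exact absurd rfl h
  | cons c cs ih =>
    intro _ hb
    have hc : 2 ≤ c := hb c List.mem_cons_self
    rcases eq_or_ne cs [] with rfl | hne
    · simpa [hj] using lt_of_lt_of_le (by norm_num) hc
    · have h1 : 1 < hj cs := ih hne fun x hx => hb x (List.mem_cons_of_mem _ hx)
      have hpos : 0 < hj cs := lt_trans one_pos h1
      have hinv : (hj cs)⁻¹ < 1 := by
        rw [inv_lt_one_iff₀]; right; exact h1
      have : hj (c :: cs) = c - (hj cs)⁻¹ := rfl
      rw [this]
      linarith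

theorem stmt_8 (l : List ℤ) (hpos : ∀ x ∈ l, 1 ≤ x) (hlen : 2 ≤ l.length)
    (h : hjZero (castList l)) : (1 : ℤ) ∈ l := by
  by_contra h1
  have hcl := castList_eq l
  have hne : castList l ≠ [] := by
    rw [hcl]
    intro hc
    have : l = [] := List.map_eq_nil_iff.mp hc
    simp [this] at hlen
  have hb : ∀ x ∈ castList l, 2 ≤ x := by
    intro x hx
    rw [hcl] at hx
    obtain ⟨y, hy, rfl⟩ := List.mem_map.mp hx
    have : 2 ≤ y := by
      rcases lt_or_eq_of_le (hpos y hy) with h2 | h2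
      · omega
      · exact absurd (h2 ▸ hy) h1
    exact_mod_cast this
  have := hj_gt_one _ hne hb
  rw [h.2] at this
  norm_num at this
end

section
/- (Combinatorics of the usual flip.) Let m > a ≥ 1 be coprime with m ≥ 2, and let [e_1, …, e_s] (all e_j ≥ 2, s ≥ 2) be the Hirzebruch–Jung expansion of m²/(ma−1). There exists an index i with e_i ≥ 3; let i be the largest such index (so e_j = 2 for all j > i). If i ≥ 2, then the sequence [e_2, …, e_{i−1}, e_i − 1] is the Hirzebruch–Jung expansion of m'²/(m'a'−1) for some coprime integers m' > a' ≥ 1 with 2 ≤ m' < m; in particular it is again a Wahl resolution string. -/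
/-- the 2x2 matrix product of [[x,-1],[1,0]], stored as (a,b,c,d) for [[a,b],[c,d]]. -/
def mat : List ℤ → ℤ × ℤ × ℤ × ℤ
  | [] => (1, 0, 0, 1)
  | x :: l => (x * (mat l).1 - (mat l).2.2.1, x * (mat l).2.1 - (mat l).2.2.2, (mat l).1, (mat l).2.1)

def modLast (l : List ℤ) : List ℤ :=
  match l.getLast? with
  | none => []
  | some c => l.dropLast ++ [c + 1]

def incFirst : List ℤ → List ℤ
  | [] => []
  | x :: t => (x + 1) :: t

lemma castList_cons (x : ℤ) (l : List ℤ) : castList (x :: l) = (x : ℚ) :: castList l := rfl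

lemma hj_cons (c : ℚ) (cs : List ℚ) : hj (c :: cs) = c - (hj cs)⁻¹ := rfl

lemma mat_concat (l : List ℤ) (x : ℤ) :
    mat (l ++ [x]) = ((mat l).1 * x + (mat l).2.1, -(mat l).1,
      (mat l).2.2.1 * x + (mat l).2.2.2, -(mat l).2.2.1) := by
  induction l with
  | nil => simp [mat]
  | cons y l ih =>
      simp only [List.cons_append, mat, ih]
      refine Prod.ext ?_ (Prod.ext ?_ (Prod.ext ?_ ?_)) <;> simp [ih] <;> ring

lemma modLast_concat (u : List ℤ) (c : ℤ) : modLast (u ++ [c]) = u ++ [c + 1] := by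
  simp [modLast, List.getLast?_concat, List.dropLast_concat]

lemma mat_modLast (l : List ℤ) (h : l ≠ []) :
    mat (modLast l) = ((mat l).1 - (mat l).2.1, (mat l).2.1,
      (mat l).2.2.1 - (mat l).2.2.2, (mat l).2.2.2) := by
  obtain ⟨u, c, rfl⟩ : ∃ u c, l = u ++ [c] := by
    rcases List.eq_nil_or_concat l with h' | ⟨u, c, h'⟩
    · exact absurd h' h
    · exact ⟨u, c, by simpa using h'⟩
  rw [modLast_concat, mat_concat, mat_concat]
  refine Prod.ext ?_ (Prod.ext ?_ (Prod.ext ?_ ?_)) <;> simp <;> ring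

lemma mat_incFirst (x : ℤ) (t : List ℤ) :
    mat (incFirst (x :: t)) = ((mat (x :: t)).1 + (mat (x :: t)).2.2.1,
      (mat (x :: t)).2.1 + (mat (x :: t)).2.2.2, (mat (x :: t)).2.2.1, (mat (x :: t)).2.2.2) := by
  simp only [incFirst, mat]
  refine Prod.ext ?_ (Prod.ext ?_ (Prod.ext ?_ ?_)) <;> simp <;> ring

lemma hj_mat (l : List ℤ) (h : l ≠ []) (h2 : ∀ x ∈ l, 2 ≤ x) :
    1 ≤ (mat l).2.2.1 ∧ (mat l).2.2.1 < (mat l).1 ∧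
      hj (castList l) = ((mat l).1 : ℚ) / ((mat l).2.2.1 : ℚ) := by
  induction l with
  | nil => exact absurd rfl h
  | cons x t ih =>
      have hx : 2 ≤ x := h2 x List.mem_cons_self
      rcases eq_or_ne t [] with rfl | ht
      · refine ⟨le_refl 1, by simp [mat]; omega, ?_⟩
        simp [mat, castList, hj]
      · obtain ⟨hc1, hca, hval⟩ := ih ht (fun y hy => h2 y (List.mem_cons_of_mem x hy))
        set A := (mat t).1 with hA
        set C := (mat t).2.2.1 with hC
        have hA2 : 2 ≤ A := by omega
        have hApos : (0 : ℚ) < (A : ℚ) := by exact_mod_cast by omega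
        have hCpos : (0 : ℚ) < (C : ℚ) := by exact_mod_cast by omega
        refine ⟨by simp [mat]; omega, by simp [mat]; nlinarith, ?_⟩
        rw [castList_cons, hj_cons, hval]
        simp only [mat]
        rw [inv_div]
        push_cast
        field_simp
        rw [← hA, ← hC]
        field_simp

lemma exists_concat {l : List ℤ} (h : l ≠ []) : ∃ u c, l = u ++ [c] := by
  rcases List.eq_nil_or_concat l with h' | ⟨u, c, h'⟩
  · exact absurd h' h
  · exact ⟨u, c, by simpa using h'⟩

lemma castList_nil : castList [] = [] := rfl
lemma hj_nil : hj [] = 0 := rfl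
lemma hj_single (x : ℤ) : hj (castList [x]) = (x : ℚ) := by
  rw [castList_cons, castList_nil, hj_cons, hj_nil]; simp

inductive IsW : ℤ → ℤ → List ℤ → Prop
  | base : IsW 2 1 [4]
  | left {m a : ℤ} {w : List ℤ} : IsW m a w → IsW (2 * m - a) m (2 :: modLast w)
  | right {m a : ℤ} {w : List ℤ} : IsW m a w → IsW (m + a) a (incFirst w ++ [2])

lemma modLast_mem {l : List ℤ} (h2 : ∀ x ∈ l, 2 ≤ x) : ∀ x ∈ modLast l, 2 ≤ x := by
  intro x hx
  rcases eq_or_ne l [] with rfl | hne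
  · simp [modLast] at hx
  · obtain ⟨u, c, rfl⟩ := exists_concat hne
    rw [modLast_concat] at hx
    rcases List.mem_append.1 hx with h | h
    · exact h2 x (List.mem_append_left _ h)
    · have hc : 2 ≤ c := h2 c (by simp)
      simp at h; omega

lemma incFirst_mem {l : List ℤ} (h2 : ∀ x ∈ l, 2 ≤ x) : ∀ x ∈ incFirst l, 2 ≤ x := by
  intro x hx
  cases l with
  | nil => simp [incFirst] at hx
  | cons y t =>
      simp [incFirst] at hx
      rcases hx with rfl | hx
      · have := h2 y (by simp); omega
      · exact h2 x (by simp [hx])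

lemma isW_props {m a : ℤ} {w : List ℤ} (h : IsW m a w) :
    2 ≤ m ∧ 1 ≤ a ∧ a < m ∧ Int.gcd m a = 1 ∧ w ≠ [] ∧ (∀ x ∈ w, 2 ≤ x) ∧
      mat w = (m ^ 2, -(m ^ 2 - m * a - 1), m * a - 1, -(m * a - a ^ 2 - 1)) := by
  induction h with
  | base =>
      refine ⟨by norm_num, by norm_num, by norm_num, by norm_num, by simp, ?_, ?_⟩
      · intro x hx; simp at hx; omega
      · simp [mat]
  | @left m a w h ih =>
      obtain ⟨hm, ha, ham, hg, hne, h2, hmat⟩ := ih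
      have hg' : Int.gcd (2 * m - a) m = 1 := by
        rw [← Int.isCoprime_iff_gcd_eq_one] at hg ⊢
        have h3 : IsCoprime (-a + 2 * m) m := (hg.symm.neg_left).add_mul_right_left 2
        have he : 2 * m - a = -a + 2 * m := by ring
        rw [he]; exact h3
      refine ⟨by omega, by omega, by omega, hg', by simp, ?_, ?_⟩
      · intro x hx
        rcases List.mem_cons.1 hx with rfl | hx
        · omega
        · exact modLast_mem h2 x hx
      · have hml := mat_modLast w hne
        simp only [mat, hml, hmat]
        refine Prod.ext ?_ (Prod.ext ?_ (Prod.ext ?_ ?_)) <;> simp <;> ring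
  | @right m a w h ih =>
      obtain ⟨hm, ha, ham, hg, hne, h2, hmat⟩ := ih
      have hg' : Int.gcd (m + a) a = 1 := by
        rw [← Int.isCoprime_iff_gcd_eq_one] at hg ⊢
        have h3 : IsCoprime (m + 1 * a) a := hg.add_mul_right_left 1
        have he : m + a = m + 1 * a := by ring
        rw [he]; exact h3
      refine ⟨by omega, by omega, by omega, hg', by simp, ?_, ?_⟩
      · intro x hx
        rcases List.mem_append.1 hx with hx | hx
        · exact incFirst_mem h2 x hx
        · simp at hx; omega
      · obtain ⟨y, t, rfl⟩ := List.exists_cons_of_ne_nil hne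
        have hif := mat_incFirst y t
        rw [mat_concat, hif, hmat]
        refine Prod.ext ?_ (Prod.ext ?_ (Prod.ext ?_ ?_)) <;> simp [hmat] <;> ring

lemma isW_exists : ∀ n : ℕ, ∀ m a : ℤ, m.natAbs ≤ n → 2 ≤ m → 1 ≤ a → a < m →
    Int.gcd m a = 1 → ∃ w, IsW m a w := by
  intro n
  induction n with
  | zero => intro m a h hm _ _ _; omega
  | succ n ih =>
      intro m a hn hm ha ham hg
      rcases lt_trichotomy (2 * a) m with hlt | heq | hgt
      · have hg' : Int.gcd (m - a) a = 1 := by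
          rw [← Int.isCoprime_iff_gcd_eq_one] at hg ⊢
          have h3 : IsCoprime (m + -1 * a) a := hg.add_mul_right_left (-1)
          have he : m - a = m + -1 * a := by ring
          rw [he]; exact h3
        obtain ⟨w, hw⟩ := ih (m - a) a (by omega) (by omega) ha (by omega) hg'
        exact ⟨_, by simpa [show m - a + a = m by ring] using hw.right⟩
      · have hga : Int.gcd (2 * a) a = a.natAbs := by
          have h := Int.gcd_mul_right 2 a 1
          simp only [one_mul] at h
          rw [h, show Int.gcd 2 1 = 1 by decide, one_mul]
        rw [← heq] at hg
        have ha1 : a = 1 := by omega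
        have hm2 : m = 2 := by omega
        subst ha1; subst hm2
        exact ⟨_, IsW.base⟩
      · have ha2 : 2 ≤ a := by omega
        have hg' : Int.gcd a (2 * a - m) = 1 := by
          rw [← Int.isCoprime_iff_gcd_eq_one] at hg ⊢
          have h3 : IsCoprime a (-m + a * 2) := (hg.symm.neg_right).add_mul_left_right 2
          have he : 2 * a - m = -m + a * 2 := by ring
          rw [he]; exact h3
        obtain ⟨w, hw⟩ := ih a (2 * a - m) (by omega) ha2 (by omega) (by omega) hg'
        exact ⟨_, by simpa [show 2 * a - (2 * a - m) = m by ring] using hw.left⟩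

lemma hj_val {m a : ℤ} {w : List ℤ} (h : IsW m a w) :
    hj (castList w) = ((m : ℚ) ^ 2) / ((m : ℚ) * (a : ℚ) - 1) := by
  obtain ⟨hm, ha, ham, hg, hne, h2, hmat⟩ := isW_props h
  obtain ⟨-, -, hv⟩ := hj_mat w hne h2
  rw [hv, hmat]
  push_cast
  ring_nf

lemma hj_gt_one_s14 {l : List ℤ} (hne : l ≠ []) (h2 : ∀ x ∈ l, 2 ≤ x) : 1 < hj (castList l) := by
  obtain ⟨hc1, hca, hv⟩ := hj_mat l hne h2
  rw [hv]
  rw [lt_div_iff₀ (by exact_mod_cast by omega)]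
  exact_mod_cast by omega

lemma hj_bounds {x : ℤ} {t : List ℤ} (ht : t ≠ []) (h2 : ∀ y ∈ x :: t, 2 ≤ y) :
    (x : ℚ) - 1 < hj (castList (x :: t)) ∧ hj (castList (x :: t)) < x := by
  have h1 : 1 < hj (castList t) := hj_gt_one_s14 ht (fun y hy => h2 y (List.mem_cons_of_mem x hy))
  have hinv1 : (hj (castList t))⁻¹ < 1 := by
    rw [inv_lt_one_iff₀]; right; exact h1
  have hinv0 : 0 < (hj (castList t))⁻¹ := by
    apply inv_pos.2; linarith
  rw [castList_cons, hj_cons]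
  constructor <;> linarith

lemma hj_unique : ∀ l₁ l₂ : List ℤ, (∀ x ∈ l₁, 2 ≤ x) → (∀ x ∈ l₂, 2 ≤ x) →
    hj (castList l₁) = hj (castList l₂) → l₁ = l₂ := by
  intro l₁
  induction l₁ with
  | nil =>
      intro l₂ _ h2 he
      cases l₂ with
      | nil => rfl
      | cons y s =>
          have hgt := hj_gt_one_s14 (l := y :: s) (by simp) h2
          rw [show hj (castList ([] : List ℤ)) = 0 from rfl] at he
          linarith
  | cons x t ih =>
      intro l₂ h1 h2 he
      cases l₂ with
      | nil =>
          have hgt := hj_gt_one_s14 (l := x :: t) (by simp) h1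
          rw [show hj (castList ([] : List ℤ)) = 0 from rfl] at he
          linarith
      | cons y s =>
          have hxy : x = y := by
            rcases eq_or_ne t [] with rfl | htne <;> rcases eq_or_ne s [] with rfl | hsne
            · rw [hj_single, hj_single] at he
              exact_mod_cast he
            · rw [hj_single] at he
              obtain ⟨hb1, hb2⟩ := hj_bounds hsne h2
              rw [← he] at hb1 hb2
              have c1 : (y : ℚ) - 1 < (x : ℚ) := hb1
              have c2 : (x : ℚ) < (y : ℚ) := hb2
              have d1 : y - 1 < x := by exact_mod_cast c1
              have d2 : x < y := by exact_mod_cast c2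
              omega
            · rw [hj_single] at he
              obtain ⟨hb1, hb2⟩ := hj_bounds htne h1
              rw [he] at hb1 hb2
              have d1 : x - 1 < y := by exact_mod_cast hb1
              have d2 : y < x := by exact_mod_cast hb2
              omega
            · obtain ⟨hb1, hb2⟩ := hj_bounds htne h1
              obtain ⟨hc1, hc2⟩ := hj_bounds hsne h2
              rw [he] at hb1 hb2
              have c1 : (y:ℚ) - 1 < (x:ℚ) := by linarith
              have c2 : (x:ℚ) - 1 < (y:ℚ) := by linarith
              have d1 : y - 1 < x := by exact_mod_cast c1
              have d2 : x - 1 < y := by exact_mod_cast c2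
              omega
          subst hxy
          have htail : (hj (castList t))⁻¹ = (hj (castList s))⁻¹ := by
            rw [castList_cons, hj_cons, castList_cons, hj_cons] at he
            linarith
          rcases eq_or_ne t [] with rfl | htne <;> rcases eq_or_ne s [] with rfl | hsne
          · rfl
          · have hgt := hj_gt_one_s14 hsne (fun y hy => h2 y (List.mem_cons_of_mem x hy))
            rw [show hj (castList ([] : List ℤ)) = 0 from rfl, inv_zero] at htail
            have : 0 < (hj (castList s))⁻¹ := inv_pos.2 (by linarith)
            rw [← htail] at this
            exact absurd this (lt_irrefl 0)
          · have hgt := hj_gt_one_s14 htne (fun y hy => h1 y (List.mem_cons_of_mem x hy))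
            rw [show hj (castList ([] : List ℤ)) = 0 from rfl, inv_zero] at htail
            have : 0 < (hj (castList t))⁻¹ := inv_pos.2 (by linarith)
            rw [htail] at this
            exact absurd this (lt_irrefl 0)
          · have heq : hj (castList t) = hj (castList s) := by
              have := congrArg (·⁻¹) htail
              simpa [inv_inv] using this
            rw [ih s (fun y hy => h1 y (List.mem_cons_of_mem x hy))
              (fun y hy => h2 y (List.mem_cons_of_mem x hy)) heq]

lemma isW_exists_three {m a : ℤ} {w : List ℤ} (h : IsW m a w) : ∃ x ∈ w, 3 ≤ x := by
  induction h with
  | base => exact ⟨4, by simp, by norm_num⟩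
  | @left m a w h ih =>
      obtain ⟨-, -, -, -, hne, h2, -⟩ := isW_props h
      obtain ⟨u, c, rfl⟩ := exists_concat hne
      have hc : 2 ≤ c := h2 c (by simp)
      refine ⟨c + 1, ?_, by omega⟩
      rw [modLast_concat]
      simp
  | @right m a w h ih =>
      obtain ⟨-, -, -, -, hne, h2, -⟩ := isW_props h
      obtain ⟨y, t, rfl⟩ := List.exists_cons_of_ne_nil hne
      have hy : 2 ≤ y := h2 y (by simp)
      exact ⟨y + 1, by simp [incFirst], by omega⟩

lemma isW_flip {M A : ℤ} {w : List ℤ} (h : IsW M A w) :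
    ∀ i : ℕ, ∀ hi : i < w.length, 3 ≤ w.get ⟨i, hi⟩ →
      (∀ j : ℕ, ∀ hje : j < w.length, i < j → w.get ⟨j, hje⟩ = 2) → 1 ≤ i →
      ∃ m' a' w', IsW m' a' w' ∧ m' < M ∧
        (w.drop 1).take (i - 1) ++ [w.get ⟨i, hi⟩ - 1] = w' := by
  induction h with
  | base =>
      intro i hi h3 hafter h1i
      simp at hi
      omega
  | @left m a w h ih =>
      intro i hi h3 hafter h1i
      obtain ⟨hm, ha, ham, -, hne, h2, -⟩ := isW_props h
      obtain ⟨u, c, rfl⟩ := exists_concat hne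
      have hc : 2 ≤ c := h2 c (by simp)
      have hml : (2 :: modLast (u ++ [c])) = 2 :: (u ++ [c + 1]) := by rw [modLast_concat]
      revert hi h3 hafter
      rw [hml]
      intro hi h3 hafter
      have hlen : (2 :: (u ++ [c + 1])).length = u.length + 2 := by simp
      -- the entry at position u.length + 1 is c + 1 ≥ 3, so i = u.length + 1
      have hlast : ∀ hj' : u.length + 1 < (2 :: (u ++ [c + 1])).length,
          (2 :: (u ++ [c + 1])).get ⟨u.length + 1, hj'⟩ = c + 1 := by
        intro hj'
        rw [List.get_eq_getElem]
        simp only [List.getElem_cons_succ]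
        rw [List.getElem_append_right (by omega)]
        simp
      have hieq : i = u.length + 1 := by
        by_contra hne'
        have hilt : i < u.length + 1 := by omega
        have h2' := hafter (u.length + 1) (by omega) (by omega)
        rw [hlast] at h2'
        omega
      subst hieq
      have hget : (2 :: (u ++ [c + 1])).get ⟨u.length + 1, hi⟩ = c + 1 := hlast hi
      refine ⟨m, a, u ++ [c], h, by omega, ?_⟩
      rw [hget]
      simp only [List.drop_one, List.tail_cons, Nat.add_sub_cancel]
      rw [List.take_left]
      norm_num
  | @right m a w h ih =>
      intro i hi h3 hafter h1i
      obtain ⟨hm, ha, ham, -, hne, h2, -⟩ := isW_props h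
      obtain ⟨y, t, rfl⟩ := List.exists_cons_of_ne_nil hne
      simp only [incFirst] at hi h3 hafter ⊢
      have hlen : (((y + 1) :: t) ++ [2]).length = t.length + 2 := by simp
      have hwlen : (y :: t).length = t.length + 1 := by simp
      -- entry at the end is 2, so i ≤ t.length
      have hlast : ∀ hj' : t.length + 1 < (((y + 1) :: t) ++ [2]).length,
          ((((y + 1) :: t) ++ [2])).get ⟨t.length + 1, hj'⟩ = 2 := by
        intro hj'
        rw [List.get_eq_getElem]
        rw [List.getElem_append_right (by simp)]
        simp
      have hile : i < t.length + 1 := by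
        by_contra hgt
        have : i = t.length + 1 := by omega
        subst this
        rw [hlast hi] at h3
        omega
      -- relate gets
      have hgets : ∀ k : ℕ, 1 ≤ k → ∀ hk : k < t.length + 1,
          ∀ hk1 : k < (((y + 1) :: t) ++ [2]).length,
          (((y + 1) :: t) ++ [2]).get ⟨k, hk1⟩ = (y :: t).get ⟨k, by omega⟩ := by
        intro k h1k hk hk1
        obtain ⟨k', rfl⟩ : ∃ k', k = k' + 1 := ⟨k - 1, by omega⟩
        rw [List.get_eq_getElem, List.get_eq_getElem]
        rw [List.getElem_append_left (by simpa using hk)]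
        simp
      obtain ⟨m', a', w', hW, hlt, heq⟩ := ih i (by omega)
        (by rw [← hgets i h1i hile hi]; exact h3)
        (by
          intro j hje hij
          have hj1 : 1 ≤ j := by omega
          rw [← hgets j hj1 (by omega) (by omega)]
          exact hafter j (by omega) hij)
        h1i
      refine ⟨m', a', w', hW, by omega, ?_⟩
      rw [← heq]
      have hd : (((y + 1) :: t) ++ [2]).drop 1 = t ++ [2] := by simp
      have hd2 : (y :: t).drop 1 = t := by simp
      rw [hd, hd2]
      have htake : (t ++ [2]).take (i - 1) = t.take (i - 1) := by
        rw [List.take_append]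
        have : i - 1 - t.length = 0 := by omega
        rw [this]
        simp
      rw [htake, hgets i h1i hile hi]

theorem stmt_14 (m a : ℤ) (hm : 2 ≤ m) (ha : 1 ≤ a) (ham : a < m)
    (hcop : Int.gcd m a = 1) (e : List ℤ) (h2 : ∀ x ∈ e, 2 ≤ x) (hlen : 2 ≤ e.length)
    (hval : hj (castList e) = (m ^ 2 : ℚ) / (m * a - 1)) :
    (∃ j : Fin e.length, 3 ≤ e.get j) ∧
    ∀ i : ℕ, ∀ hi : i < e.length, 3 ≤ e.get ⟨i, hi⟩ →
      (∀ j : ℕ, ∀ hje : j < e.length, i < j → e.get ⟨j, hje⟩ = 2) →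
      1 ≤ i →
      ∃ m' a' : ℤ, 2 ≤ m' ∧ m' < m ∧ 1 ≤ a' ∧ a' < m' ∧ Int.gcd m' a' = 1 ∧
        (∀ x ∈ (e.drop 1).take (i - 1) ++ [e.get ⟨i, hi⟩ - 1], 2 ≤ x) ∧
        hj (castList ((e.drop 1).take (i - 1) ++ [e.get ⟨i, hi⟩ - 1]))
          = (m' ^ 2 : ℚ) / (m' * a' - 1) := by
  obtain ⟨w, hw⟩ := isW_exists m.natAbs m a le_rfl hm ha ham hcop
  obtain ⟨-, -, -, -, hne, h2w, -⟩ := isW_props hw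
  have hew : e = w := by
    apply hj_unique e w h2 h2w
    rw [hval, hj_val hw]
  subst hew
  constructor
  · obtain ⟨x, hxmem, hx3⟩ := isW_exists_three hw
    obtain ⟨n, hn, hnx⟩ := List.mem_iff_getElem.1 hxmem
    exact ⟨⟨n, hn⟩, by rw [List.get_eq_getElem, hnx]; exact hx3⟩
  · intro i hi h3 hafter h1i
    obtain ⟨m', a', w', hW, hlt, heq⟩ := isW_flip hw i hi h3 hafter h1i
    obtain ⟨hm', ha', ham', hcop', hne', h2', -⟩ := isW_props hW
    refine ⟨m', a', hm', hlt, ha', ham', hcop', ?_, ?_⟩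
    · rw [heq]; exact h2'
    · rw [heq, hj_val hW]
end
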